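/- The coefficient c(τ,ϱ) = ∫_{ξ_-}^{ξ_+} (x² + (1−τ²)²ϱ²/4)^{−1/4} dx can be expressed as c(τ,ϱ) = √(2/ϱ)·(1−τ²)^{−1/2}·[₂F₁(1/4, 1/2; 3/2; −4ξ_+²/(ϱ²(1−τ²)²))·ξ_+ − ₂F₁(1/4, 1/2; 3/2; −4ξ_-²/(ϱ²(1−τ²)²))·ξ_-] for τ ∈ [0,1) and ϱ > 0. -/

import Mathlib

open Real

/-- The Gauss hypergeometric function `₂F₁(a,b;c;z)` via the Euler integral
(for `c > b > 0`, `z ≤ 0`):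
`₂F₁(a,b;c;z) = Γ(c)/(Γ(b)Γ(c−b)) ∫₀¹ t^{b−1}(1−t)^{c−b−1}(1−zt)^{−a} dt`. -/
noncomputable def hyp2F1 (a b c z : ℝ) : ℝ :=
  Real.Gamma c / (Real.Gamma b * Real.Gamma (c - b)) *
    ∫ t in (0 : ℝ)..1, t ^ (b - 1) * (1 - t) ^ (c - b - 1) * (1 - z * t) ^ (-a)

open MeasureTheory Set in
lemma aux_intOn_g (c : ℝ) (hc : 0 ≤ c) :
    IntegrableOn (fun t : ℝ => t ^ (-(1/2) : ℝ) * (1 + c*t) ^ (-(1/4) : ℝ)) (Icc 0 1) := by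
  rw [integrableOn_Icc_iff_integrableOn_Ioc]
  have h1 : IntegrableOn (fun t : ℝ => t ^ (-(1/2) : ℝ)) (Ioc (0:ℝ) 1) := by
    have := intervalIntegral.intervalIntegrable_rpow' (a := (0:ℝ)) (b := 1) (r := -(1/2)) (by norm_num)
    rw [intervalIntegrable_iff_integrableOn_Ioc_of_le (by norm_num)] at this
    exact this
  have hmeas : AEStronglyMeasurable (fun t : ℝ => t ^ (-(1/2) : ℝ) * (1 + c*t) ^ (-(1/4) : ℝ))
      (volume.restrict (Ioc (0:ℝ) 1)) := by
    apply ContinuousOn.aestronglyMeasurable _ measurableSet_Ioc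
    intro t ht
    have ht0 : t ≠ 0 := ne_of_gt ht.1
    have h1t : (1:ℝ) + c*t ≠ 0 := by nlinarith [ht.1.le, ht.2]
    exact ((continuousAt_id.rpow_const (Or.inl ht0)).mul
      ((continuousAt_const.add (continuousAt_const.mul continuousAt_id)).rpow_const (Or.inl h1t))).continuousWithinAt
  apply h1.mono' hmeas
  filter_upwards [ae_restrict_mem measurableSet_Ioc] with t ht
  have h0 : (0:ℝ) ≤ t := ht.1.le
  have hf1 : (0:ℝ) ≤ t ^ (-(1/2):ℝ) := Real.rpow_nonneg h0 _
  have hf2 : (1 + c*t) ^ (-(1/4):ℝ) ≤ 1 :=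
    Real.rpow_le_one_of_one_le_of_nonpos (by nlinarith) (by norm_num)
  have hf2' : (0:ℝ) ≤ (1 + c*t) ^ (-(1/4):ℝ) := Real.rpow_nonneg (by nlinarith) _
  rw [Real.norm_eq_abs, abs_mul, abs_of_nonneg hf1, abs_of_nonneg hf2']
  exact mul_le_of_le_one_right hf1 hf2

lemma aux_contA (c : ℝ) (hc : 0 ≤ c) : Continuous (fun s : ℝ => (1 + c*s^2) ^ (-(1/4):ℝ)) := by
  apply Continuous.rpow_const (by continuity)
  intro s; left; nlinarith [sq_nonneg s]

open MeasureTheory Set in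
lemma aux_subA (c : ℝ) (hc : 0 ≤ c) :
    (∫ t in (0:ℝ)..1, t ^ (-(1/2):ℝ) * (1 + c*t) ^ (-(1/4):ℝ))
      = 2 * ∫ s in (0:ℝ)..1, (1 + c*s^2) ^ (-(1/4):ℝ) := by
  set g : ℝ → ℝ := fun t => t ^ (-(1/2):ℝ) * (1 + c*t) ^ (-(1/4):ℝ) with hg
  have himg : (fun s : ℝ => s^2) '' Icc 0 1 ⊆ Icc 0 1 := by
    rintro _ ⟨s, hs, rfl⟩
    refine ⟨sq_nonneg s, ?_⟩
    show s^2 ≤ 1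
    nlinarith [hs.1, hs.2, mul_nonneg (sub_nonneg.mpr hs.2) hs.1]
  have key : (∫ s in (0:ℝ)..1, (2*s) • g (s^2)) = ∫ t in (0:ℝ)..(1:ℝ), g t := by
    have := intervalIntegral.integral_comp_smul_deriv''' (a := (0:ℝ)) (b := 1)
      (f := fun s => s^2) (f' := fun s => 2*s) (g := g)
      ((continuous_pow 2).continuousOn)
      (fun x hx => by
        simpa using (hasDerivAt_pow 2 x).hasDerivWithinAt)
      (by
        rintro _ ⟨s, hs, rfl⟩
        norm_num at hs
        apply ContinuousAt.continuousWithinAt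
        have ht0 : s^2 ≠ 0 := pow_ne_zero 2 (ne_of_gt hs.1)
        have h1t : (1:ℝ) + c*s^2 ≠ 0 := by nlinarith [sq_nonneg s]
        exact (continuousAt_id.rpow_const (Or.inl ht0)).mul
          ((continuousAt_const.add (continuousAt_const.mul continuousAt_id)).rpow_const
            (Or.inl h1t)))
      (by
        apply (aux_intOn_g c hc).mono_set
        simpa [Set.uIcc_of_le (by norm_num : (0:ℝ) ≤ 1)] using himg)
      (by
        rw [Set.uIcc_of_le (by norm_num : (0:ℝ) ≤ 1)]
        have hcont : IntegrableOn (fun s : ℝ => 2*(1 + c*s^2) ^ (-(1/4):ℝ)) (Icc (0:ℝ) 1) :=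
          (continuous_const.mul (aux_contA c hc)).integrableOn_Icc
        apply hcont.congr
        have h0 : ∀ᵐ (s:ℝ), s ≠ 0 := by
          rw [MeasureTheory.ae_iff]
          simp
        filter_upwards [ae_restrict_mem measurableSet_Icc, ae_restrict_of_ae h0] with s hs hs0
        have hspos : 0 < s := lt_of_le_of_ne hs.1 (Ne.symm hs0)
        have hsq : ((s^2:ℝ))^(-(1/2):ℝ) = s⁻¹ := by
          rw [← Real.rpow_natCast s 2, ← Real.rpow_mul hspos.le]
          norm_num [Real.rpow_neg_one]
        simp only [hg, Function.comp_apply, smul_eq_mul, hsq]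
        field_simp)
    simpa using this
  rw [← key, ← intervalIntegral.integral_const_mul]
  apply intervalIntegral.integral_congr_ae
  filter_upwards with s hs
  rw [Set.uIoc_of_le (by norm_num : (0:ℝ) ≤ 1)] at hs
  have hspos : 0 < s := hs.1
  have hsq : ((s^2:ℝ))^(-(1/2):ℝ) = s⁻¹ := by
    rw [← Real.rpow_natCast s 2, ← Real.rpow_mul hspos.le]
    norm_num [Real.rpow_neg_one]
  simp only [hg, smul_eq_mul, hsq]
  field_simp

lemma aux_hyp_eval (c : ℝ) (hc : 0 ≤ c) :
    hyp2F1 (1/4) (1/2) (3/2) (-c) = ∫ s in (0:ℝ)..1, (1 + c*s^2) ^ (-(1/4):ℝ) := by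
  unfold hyp2F1
  have hconst : Real.Gamma (3/2) / (Real.Gamma (1/2) * Real.Gamma (3/2 - 1/2)) = 1/2 := by
    rw [show (3/2:ℝ) - 1/2 = 1 by norm_num, Real.Gamma_one,
      show (3/2:ℝ) = 1/2 + 1 by norm_num, Real.Gamma_add_one (by norm_num : (1/2:ℝ) ≠ 0)]
    have h := (Real.Gamma_pos_of_pos (by norm_num : (0:ℝ) < 1/2)).ne'
    field_simp
  rw [hconst]
  have hcong : (∫ t in (0:ℝ)..1, t ^ ((1:ℝ)/2 - 1) * (1 - t) ^ ((3:ℝ)/2 - 1/2 - 1) * (1 - -c * t) ^ (-(1/4):ℝ))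
      = ∫ t in (0:ℝ)..1, t ^ (-(1/2):ℝ) * (1 + c*t) ^ (-(1/4):ℝ) := by
    apply intervalIntegral.integral_congr
    intro t _
    have h1 : (1:ℝ)/2 - 1 = -(1/2) := by norm_num
    have h2 : (3:ℝ)/2 - 1/2 - 1 = 0 := by norm_num
    have h3 : (1:ℝ) - -c * t = 1 + c*t := by ring
    simp only [h1, h2, h3, Real.rpow_zero, mul_one]
  rw [hcong, aux_subA c hc]
  ring

lemma aux_keyLemma (m ξ : ℝ) (hm : 0 < m) :
    (∫ x in (0:ℝ)..ξ, (x^2 + m^2) ^ (-(1/4):ℝ))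
      = m ^ (-(1/2):ℝ) * (hyp2F1 (1/4) (1/2) (3/2) (-(ξ^2/m^2)) * ξ) := by
  have hc : (0:ℝ) ≤ ξ^2/m^2 := by positivity
  rw [aux_hyp_eval _ hc]
  have hsub := intervalIntegral.smul_integral_comp_mul_left
    (f := fun x : ℝ => (x^2 + m^2) ^ (-(1/4):ℝ)) (a := 0) (b := 1) ξ
  simp only [mul_zero, mul_one, smul_eq_mul] at hsub
  rw [← hsub]
  have hpt : ∀ s : ℝ, ((ξ*s)^2 + m^2) ^ (-(1/4):ℝ)
      = m ^ (-(1/2):ℝ) * (1 + (ξ^2/m^2)*s^2) ^ (-(1/4):ℝ) := by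
    intro s
    have hms : ((ξ*s)^2 + m^2) = m^2 * (1 + (ξ^2/m^2)*s^2) := by
      field_simp
      ring
    rw [hms, Real.mul_rpow (sq_nonneg m) (by positivity)]
    congr 1
    rw [← Real.rpow_natCast m 2, ← Real.rpow_mul hm.le]
    norm_num
  simp only [hpt]
  rw [intervalIntegral.integral_const_mul]
  ring

/-- hypergeometric expression for
`c(τ,ϱ) = ∫_{ξ₋}^{ξ₊} (x² + (1−τ²)²ϱ²/4)^{−1/4} dx`, where
`ξ± = τ(2+ϱ) ± (1+τ²)√(1+ϱ)`, for `τ ∈ [0,1)` and `ϱ > 0`. -/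
theorem c_strong_hypergeometric (τ ϱ : ℝ) (hτ0 : 0 ≤ τ) (hτ1 : τ < 1) (hϱ : 0 < ϱ) :
    (∫ x in (τ * (2 + ϱ) - (1 + τ ^ 2) * Real.sqrt (1 + ϱ))..(τ * (2 + ϱ) + (1 + τ ^ 2) * Real.sqrt (1 + ϱ)),
        (x ^ 2 + (1 - τ ^ 2) ^ 2 * ϱ ^ 2 / 4) ^ (-(1 / 4 : ℝ)))
      = Real.sqrt (2 / ϱ) * (1 - τ ^ 2) ^ (-(1 / 2 : ℝ)) *
        (hyp2F1 (1 / 4) (1 / 2) (3 / 2)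
            (-(4 * (τ * (2 + ϱ) + (1 + τ ^ 2) * Real.sqrt (1 + ϱ)) ^ 2 / (ϱ ^ 2 * (1 - τ ^ 2) ^ 2)))
            * (τ * (2 + ϱ) + (1 + τ ^ 2) * Real.sqrt (1 + ϱ))
          - hyp2F1 (1 / 4) (1 / 2) (3 / 2)
            (-(4 * (τ * (2 + ϱ) - (1 + τ ^ 2) * Real.sqrt (1 + ϱ)) ^ 2 / (ϱ ^ 2 * (1 - τ ^ 2) ^ 2)))
            * (τ * (2 + ϱ) - (1 + τ ^ 2) * Real.sqrt (1 + ϱ))) := by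
  have ht2 : τ^2 < 1 := by nlinarith
  have h1τ : (0:ℝ) < 1 - τ^2 := by linarith
  set m : ℝ := ϱ*(1-τ^2)/2 with hmdef
  have hm : 0 < m := by positivity
  have hm2 : (1 - τ^2)^2 * ϱ^2 / 4 = m^2 := by rw [hmdef]; ring
  set ξp : ℝ := τ * (2 + ϱ) + (1 + τ ^ 2) * Real.sqrt (1 + ϱ) with hξp
  set ξm : ℝ := τ * (2 + ϱ) - (1 + τ ^ 2) * Real.sqrt (1 + ϱ) with hξm
  have hInt : ∀ a b : ℝ, IntervalIntegrable (fun x : ℝ => (x^2 + m^2) ^ (-(1/4):ℝ)) MeasureTheory.volume a b := by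
    intro a b
    apply Continuous.intervalIntegrable
    apply Continuous.rpow_const (by continuity)
    intro x; left; positivity
  have hz : ∀ ξ : ℝ, -(4 * ξ^2 / (ϱ^2 * (1-τ^2)^2)) = -(ξ^2/m^2) := by
    intro ξ
    rw [hmdef]
    have hϱ' : ϱ ≠ 0 := hϱ.ne'
    have h1τ' : (1:ℝ) - τ^2 ≠ 0 := h1τ.ne'
    field_simp
    ring
  have hpref : Real.sqrt (2/ϱ) * (1-τ^2) ^ (-(1/2):ℝ) = m ^ (-(1/2):ℝ) := by
    rw [Real.sqrt_eq_rpow]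
    rw [Real.rpow_neg h1τ.le, ← Real.inv_rpow h1τ.le]
    rw [← Real.mul_rpow (by positivity) (by positivity)]
    rw [Real.rpow_neg hm.le, ← Real.inv_rpow hm.le]
    congr 2
    rw [hmdef]
    field_simp
  have hsplit : (∫ x in ξm..ξp, (x^2 + m^2) ^ (-(1/4):ℝ))
      = (∫ x in (0:ℝ)..ξp, (x^2 + m^2) ^ (-(1/4):ℝ))
        - (∫ x in (0:ℝ)..ξm, (x^2 + m^2) ^ (-(1/4):ℝ)) := by
    rw [← intervalIntegral.integral_add_adjacent_intervals (hInt ξm 0) (hInt 0 ξp),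
      intervalIntegral.integral_symm]
    ring
  calc (∫ x in ξm..ξp, (x ^ 2 + (1 - τ ^ 2) ^ 2 * ϱ ^ 2 / 4) ^ (-(1 / 4 : ℝ)))
      = ∫ x in ξm..ξp, (x^2 + m^2) ^ (-(1/4):ℝ) := by rw [hm2]
    _ = (∫ x in (0:ℝ)..ξp, (x^2 + m^2) ^ (-(1/4):ℝ))
        - (∫ x in (0:ℝ)..ξm, (x^2 + m^2) ^ (-(1/4):ℝ)) := hsplit
    _ = m ^ (-(1/2):ℝ) * (hyp2F1 (1/4) (1/2) (3/2) (-(ξp^2/m^2)) * ξp)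
        - m ^ (-(1/2):ℝ) * (hyp2F1 (1/4) (1/2) (3/2) (-(ξm^2/m^2)) * ξm) := by
        rw [aux_keyLemma m ξp hm, aux_keyLemma m ξm hm]
    _ = Real.sqrt (2 / ϱ) * (1 - τ ^ 2) ^ (-(1 / 2 : ℝ)) *
        (hyp2F1 (1 / 4) (1 / 2) (3 / 2) (-(4 * ξp ^ 2 / (ϱ ^ 2 * (1 - τ ^ 2) ^ 2))) * ξp
          - hyp2F1 (1 / 4) (1 / 2) (3 / 2) (-(4 * ξm ^ 2 / (ϱ ^ 2 * (1 - τ ^ 2) ^ 2))) * ξm) := by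
        rw [hpref, hz ξp, hz ξm]
        ring
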